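/- If the polar complex Γ(C) of a code C ⊆ 2^[n] is shellable, then either C = 2^[n] (so Γ(C) is the boundary of the n-cross-polytope, homotopy equivalent to S^{n−1}) or Γ(C) is collapsible. -/

import Mathlib

open scoped symmDiff


def polarFace {n : ℕ} (σ : Finset (Fin n)) : Finset (Fin n ⊕ Fin n) :=
  σ.image Sum.inl ∪ σᶜ.image Sum.inr

def polar {n : ℕ} (C : Set (Finset (Fin n))) : Set (Finset (Fin n ⊕ Fin n)) :=
  {F | ∃ σ ∈ C, F ⊆ polarFace σ}

section Collapse
variable {V : Type*} [DecidableEq V]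

def IsFacet (Δ : Set (Finset V)) (τ : Finset V) : Prop :=
  τ ∈ Δ ∧ ∀ s ∈ Δ, τ ⊆ s → s = τ

def FreePair (Δ : Set (Finset V)) (σ τ : Finset V) : Prop :=
  IsFacet Δ τ ∧ σ ⊂ τ ∧ ∀ τ', IsFacet Δ τ' → σ ⊆ τ' → τ' = τ

def CollapseStep (Δ Δ' : Set (Finset V)) : Prop :=
  ∃ σ τ, FreePair Δ σ τ ∧ Δ' = {ν ∈ Δ | ¬ σ ⊆ ν}

def Collapses (Δ Δ' : Set (Finset V)) : Prop :=
  Relation.ReflTransGen CollapseStep Δ Δ'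

def Collapsible (Δ : Set (Finset V)) : Prop :=
  Collapses Δ (∅ : Set (Finset V))

/-- A shelling order of a pure complex whose facets `F i` all have cardinality `k`:
each `Δ({F_i}) ∩ Δ({F₁,…,F_{i-1}})` is pure of dimension `k - 2`
(every face of it extends, inside it, to one of cardinality `k - 1`). -/
def IsShelling {t : ℕ} (k : ℕ) (F : Fin t → Finset V) : Prop :=
  (∀ i, (F i).card = k) ∧ Function.Injective F ∧
  ∀ i : Fin t, 0 < (i : ℕ) → ∀ ν ⊆ F i, (∃ j, j < i ∧ ν ⊆ F j) →
    ∃ μ, μ ⊆ F i ∧ (∃ j, j < i ∧ μ ⊆ F j) ∧ ν ⊆ μ ∧ μ.card = k - 1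

/-- `Δ` is shellable (with facets of cardinality `k`). -/
def Shellable (k : ℕ) (Δ : Set (Finset V)) : Prop :=
  ∃ (t : ℕ) (F : Fin t → Finset V), IsShelling k F ∧ Δ = {ν | ∃ i, ν ⊆ F i}

end Collapse

section ChainsAux
variable {V : Type*} [DecidableEq V] [Fintype V]


/-- The set of `x ∉ μ` with `insert x μ ∈ c`. -/
def multSet (c : Finset (Finset V)) (μ : Finset V) : Finset V :=
  Finset.univ.filter (fun x => x ∉ μ ∧ insert x μ ∈ c)

lemma mem_multSet {c : Finset (Finset V)} {μ : Finset V} {x : V} :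
    x ∈ multSet c μ ↔ x ∉ μ ∧ insert x μ ∈ c := by
  simp [multSet]

/-- Mod 2 boundary of a chain of faces. -/
def bdry (c : Finset (Finset V)) : Finset (Finset V) :=
  Finset.univ.filter (fun μ => Odd (multSet c μ).card)

lemma mem_bdry {c : Finset (Finset V)} {μ : Finset V} :
    μ ∈ bdry c ↔ Odd (multSet c μ).card := by simp [bdry]

lemma bdry_empty : bdry (∅ : Finset (Finset V)) = ∅ := by
  ext μ; simp [mem_bdry, multSet]

lemma multSet_symmDiff (a b : Finset (Finset V)) (μ : Finset V) :
    multSet (a ∆ b) μ = multSet a μ ∆ multSet b μ := by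
  ext x
  simp only [mem_multSet, Finset.mem_symmDiff, mem_multSet]
  tauto

lemma card_symmDiff_parity (s t : Finset V) :
    (s ∆ t).card % 2 = (s.card + t.card) % 2 := by
  have h1 : (s \ t).card + (s ∩ t).card = s.card := Finset.card_sdiff_add_card_inter s t
  have h2 : (t \ s).card + (t ∩ s).card = t.card := Finset.card_sdiff_add_card_inter t s
  have h3 : (s ∆ t).card = (s \ t).card + (t \ s).card := by
    rw [symmDiff_def]
    exact Finset.card_union_of_disjoint (disjoint_sdiff_sdiff)
  have h4 : (s ∩ t).card = (t ∩ s).card := by rw [Finset.inter_comm]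
  omega

lemma bdry_symmDiff (a b : Finset (Finset V)) : bdry (a ∆ b) = bdry a ∆ bdry b := by
  ext μ
  simp only [mem_bdry, Finset.mem_symmDiff, mem_bdry]
  rw [Nat.odd_iff, Nat.odd_iff, Nat.odd_iff, multSet_symmDiff, card_symmDiff_parity]
  omega

lemma bdry_singleton (ν : Finset V) :
    bdry ({ν} : Finset (Finset V)) = ν.image (ν.erase ·) := by
  ext μ
  simp only [mem_bdry, Finset.mem_image]
  constructor
  · intro h
    obtain ⟨x, hx⟩ := Finset.card_pos.mp h.pos
    rw [mem_multSet] at hx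
    obtain ⟨hxμ, hins⟩ := hx
    simp only [Finset.mem_singleton] at hins
    exact ⟨x, hins ▸ Finset.mem_insert_self x μ, by rw [← hins, Finset.erase_insert hxμ]⟩
  · rintro ⟨y, hy, rfl⟩
    have : multSet ({ν} : Finset (Finset V)) (ν.erase y) = {y} := by
      ext x
      simp only [mem_multSet, Finset.mem_singleton]
      constructor
      · rintro ⟨hx, hins⟩
        have hxν : x ∈ ν := hins ▸ Finset.mem_insert_self x _
        by_contra hxy
        exact hx (Finset.mem_erase.mpr ⟨hxy, hxν⟩)
      · rintro rfl
        exact ⟨Finset.notMem_erase _ _, Finset.insert_erase hy⟩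
    rw [this]; simp

lemma bdry_bdry_singleton (ν : Finset V) :
    bdry (bdry ({ν} : Finset (Finset V))) = ∅ := by
  rw [bdry_singleton]
  ext μ
  simp only [mem_bdry, Finset.notMem_empty, iff_false]
  rw [Nat.odd_iff]
  by_cases h : μ ⊆ ν ∧ μ.card + 2 = ν.card
  · have hset : multSet (ν.image (ν.erase ·)) μ = ν \ μ := by
      ext x
      simp only [mem_multSet, Finset.mem_image, Finset.mem_sdiff]
      constructor
      · rintro ⟨hxμ, y, hy, hins⟩
        have hx : x ∈ ν.erase y := by rw [hins]; exact Finset.mem_insert_self x μ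
        exact ⟨Finset.mem_of_mem_erase hx, hxμ⟩
      · rintro ⟨hxν, hxμ⟩
        have hcard : (ν \ μ).card = 2 := by
          rw [Finset.card_sdiff_of_subset h.1]; omega
        have hx : x ∈ ν \ μ := Finset.mem_sdiff.mpr ⟨hxν, hxμ⟩
        have : ((ν \ μ).erase x).card = 1 := by
          rw [Finset.card_erase_of_mem hx, hcard]
        obtain ⟨y, hy⟩ := Finset.card_eq_one.mp this
        have hyx : y ≠ x := by
          have := hy ▸ Finset.mem_singleton_self y
          exact (Finset.mem_erase.mp this).1
        have hymem : y ∈ ν \ μ := Finset.mem_of_mem_erase (hy ▸ Finset.mem_singleton_self y)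
        refine ⟨hxμ, y, (Finset.mem_sdiff.mp hymem).1, Eq.symm ?_⟩
        refine Finset.eq_of_subset_of_card_le (fun z hz => ?_) ?_
        · rcases Finset.mem_insert.mp hz with rfl | hz'
          · exact Finset.mem_erase.mpr ⟨fun h' => hyx h'.symm, hxν⟩
          · exact Finset.mem_erase.mpr ⟨fun h' => (Finset.mem_sdiff.mp hymem).2 (h' ▸ hz'), h.1 hz'⟩
        · rw [Finset.card_erase_of_mem (Finset.mem_sdiff.mp hymem).1,
            Finset.card_insert_of_notMem hxμ]
          omega
    rw [hset, Finset.card_sdiff_of_subset h.1]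
    omega
  · have hset : multSet (ν.image (ν.erase ·)) μ = ∅ := by
      ext x
      simp only [mem_multSet, Finset.mem_image, Finset.notMem_empty, iff_false]
      rintro ⟨hxμ, y, hy, hins⟩
      have hμν : μ ⊆ ν := by
        intro z hz
        have : z ∈ ν.erase y := by rw [hins]; exact Finset.mem_insert.mpr (Or.inr hz)
        exact Finset.mem_of_mem_erase this
      have hc1 : (insert x μ).card = μ.card + 1 := Finset.card_insert_of_notMem hxμ
      have hc2 : (ν.erase y).card = ν.card - 1 := Finset.card_erase_of_mem hy
      have hν1 : 1 ≤ ν.card := Finset.card_pos.mpr ⟨y, hy⟩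
      have : (insert x μ).card = (ν.erase y).card := by rw [hins]
      exact h ⟨hμν, by omega⟩
    rw [hset]
    simp

lemma singleton_symmDiff_of_not_mem {a : Finset V} {s : Finset (Finset V)} (h : a ∉ s) :
    ({a} : Finset (Finset V)) ∆ s = insert a s := by
  ext x
  simp only [Finset.mem_symmDiff, Finset.mem_singleton, Finset.mem_insert]
  constructor
  · rintro (⟨rfl, -⟩ | ⟨hx, -⟩) <;> tauto
  · rintro (rfl | hx)
    · exact Or.inl ⟨rfl, h⟩
    · exact Or.inr ⟨hx, fun he => h (he ▸ hx)⟩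

lemma bdry_bdry (c : Finset (Finset V)) : bdry (bdry c) = ∅ := by
  induction c using Finset.induction_on with
  | empty => rw [bdry_empty, bdry_empty]
  | insert a s h ih =>
    rw [← singleton_symmDiff_of_not_mem h, bdry_symmDiff, bdry_symmDiff,
      bdry_bdry_singleton, ih]
    simp


lemma interval_exact (Δ Δ' : Set (Finset V)) (σ τ : Finset V) (v : V)
    (hτΔ : τ ∈ Δ) (hvτ : v ∈ τ) (hvσ : v ∉ σ)
    (hdown : ∀ ν ∈ Δ, ∀ μ, μ ⊆ ν → μ ∈ Δ)
    (h1 : ∀ ν ∈ Δ, σ ⊆ ν → ν ⊆ τ)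
    (hΔ' : Δ' = {ν ∈ Δ | ¬ σ ⊆ ν})
    (hex : ∀ z : Finset (Finset V), (∀ ν ∈ z, ν ∈ Δ') → bdry z = ∅ →
      ∃ c, (∀ ν ∈ c, ν ∈ Δ') ∧ bdry c = z) :
    ∀ z : Finset (Finset V), (∀ ν ∈ z, ν ∈ Δ) → bdry z = ∅ →
      ∃ c, (∀ ν ∈ c, ν ∈ Δ) ∧ bdry c = z := by
  intro z hz hzc
  classical
  set w : Finset (Finset V) :=
    (z.filter (fun ν => σ ⊆ ν ∧ v ∉ ν)).image (insert v) with hw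
  have hwmem : ∀ ν ∈ w, ν ∈ Δ ∧ σ ⊆ ν ∧ ν ⊆ τ ∧ v ∈ ν := by
    intro ν hν
    rw [hw, Finset.mem_image] at hν
    obtain ⟨ν₀, hν₀, rfl⟩ := hν
    rw [Finset.mem_filter] at hν₀
    obtain ⟨hν₀z, hσν₀, hvν₀⟩ := hν₀
    have hν₀τ : ν₀ ⊆ τ := h1 ν₀ (hz ν₀ hν₀z) hσν₀
    have hsubτ : insert v ν₀ ⊆ τ := Finset.insert_subset hvτ hν₀τ
    exact ⟨hdown τ hτΔ _ hsubτ, hσν₀.trans (Finset.subset_insert _ _),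
      hsubτ, Finset.mem_insert_self _ _⟩
  have key : ∀ μ : Finset V, σ ⊆ μ → (μ ∈ bdry w ↔ μ ∈ z) := by
    intro μ hσμ
    by_cases hvμ : v ∈ μ
    · -- use the cycle condition at ρ = μ.erase v
      set ρ := μ.erase v with hρ
      have hσρ : σ ⊆ ρ := fun x hx => Finset.mem_erase.mpr ⟨fun h => hvσ (h ▸ hx), hσμ hx⟩
      have hsplit : multSet z ρ = (if μ ∈ z then {v} else ∅) ∪ multSet w μ := by
        ext y
        rw [mem_multSet, Finset.mem_union, mem_multSet]
        constructor
        · rintro ⟨hyρ, hins⟩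
          by_cases hyv : y = v
          · subst hyv
            left
            rw [Finset.insert_erase hvμ] at hins
            simp [hins]
          · right
            refine ⟨fun hyμ => hyρ (Finset.mem_erase.mpr ⟨hyv, hyμ⟩), ?_⟩
            rw [hw, Finset.mem_image]
            refine ⟨insert y ρ, ?_, ?_⟩
            · rw [Finset.mem_filter]
              refine ⟨hins, hσρ.trans (Finset.subset_insert _ _), ?_⟩
              simp only [Finset.mem_insert, hρ]
              rintro (h | h)
              · exact hyv h.symm
              · exact Finset.notMem_erase v μ h
            · rw [Finset.insert_comm, hρ, Finset.insert_erase hvμ]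
        · rintro (hy | ⟨hyμ, hins⟩)
          · split_ifs at hy with hmem
            · rw [Finset.mem_singleton] at hy
              subst hy
              exact ⟨Finset.notMem_erase _ _, by rwa [hρ, Finset.insert_erase hvμ]⟩
            · exact absurd hy (Finset.notMem_empty _)
          · rw [hw, Finset.mem_image] at hins
            obtain ⟨ν₀, hν₀, heq⟩ := hins
            rw [Finset.mem_filter] at hν₀
            obtain ⟨hν₀z, hσν₀, hvν₀⟩ := hν₀
            have hyv : y ≠ v := fun h => hyμ (h ▸ hvμ)
            have hν₀eq : ν₀ = insert y ρ := by
              have h2 : (insert v ν₀).erase v = (insert y μ).erase v := by rw [heq]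
              rwa [Finset.erase_insert hvν₀, Finset.erase_insert_of_ne hyv] at h2
            exact ⟨fun hyρ => hyμ (Finset.mem_of_mem_erase hyρ), hν₀eq ▸ hν₀z⟩
      have hdisj : Disjoint (if μ ∈ z then ({v} : Finset V) else ∅) (multSet w μ) := by
        split_ifs
        · rw [Finset.disjoint_singleton_left, mem_multSet]
          rintro ⟨hvμ', -⟩
          exact hvμ' hvμ
        · exact Finset.disjoint_empty_left _
      have hρnot : ¬ Odd (multSet z ρ).card := by
        have h3 : ρ ∉ bdry z := by rw [hzc]; exact Finset.notMem_empty _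
        rwa [mem_bdry] at h3
      rw [hsplit, Finset.card_union_of_disjoint hdisj] at hρnot
      rw [mem_bdry, Nat.odd_iff]
      rw [Nat.odd_iff] at hρnot
      by_cases hmem : μ ∈ z
      · simp only [hmem, if_true, Finset.card_singleton] at hρnot
        simp only [hmem, iff_true]
        omega
      · simp only [hmem, if_false, Finset.card_empty] at hρnot
        simp only [hmem, iff_false]
        omega
    · have hset : multSet w μ = if μ ∈ z then {v} else ∅ := by
        ext x
        rw [mem_multSet]
        constructor
        · rintro ⟨hxμ, hins⟩
          have hvx : x = v := by
            by_contra hxv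
            have h4 := (hwmem _ hins).2.2.2
            rcases Finset.mem_insert.mp h4 with h' | h'
            · exact hxv h'.symm
            · exact hvμ h'
          rw [hvx] at hins ⊢
          rw [hw, Finset.mem_image] at hins
          obtain ⟨ν₀, hν₀, heq⟩ := hins
          rw [Finset.mem_filter] at hν₀
          have hν₀μ : ν₀ = μ := by
            have h2 : (insert v ν₀).erase v = (insert v μ).erase v := by rw [heq]
            rwa [Finset.erase_insert hν₀.2.2, Finset.erase_insert hvμ] at h2
          rw [hν₀μ] at hν₀
          simp [hν₀.1]
        · intro hx
          split_ifs at hx with hmem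
          · rw [Finset.mem_singleton] at hx
            subst hx
            refine ⟨hvμ, ?_⟩
            rw [hw, Finset.mem_image]
            exact ⟨μ, Finset.mem_filter.mpr ⟨hmem, hσμ, hvμ⟩, rfl⟩
          · exact absurd hx (Finset.notMem_empty _)
      rw [mem_bdry, hset]
      by_cases hmem : μ ∈ z <;> simp [hmem]
  set z' := z ∆ bdry w with hz'
  have hwΔ : ∀ ν ∈ bdry w, ν ∈ Δ := by
    intro ν hν
    rw [mem_bdry] at hν
    obtain ⟨x, hx⟩ := Finset.card_pos.mp hν.pos
    rw [mem_multSet] at hx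
    have h5 := (hwmem _ hx.2).2.2.1
    exact hdown τ hτΔ ν ((Finset.subset_insert x ν).trans h5)
  have hz'mem : ∀ ν ∈ z', ν ∈ Δ' := by
    intro ν hν
    have hνΔ : ν ∈ Δ := by
      rcases Finset.mem_symmDiff.mp hν with ⟨h', -⟩ | ⟨h', -⟩
      · exact hz ν h'
      · exact hwΔ ν h'
    rw [hΔ']
    refine ⟨hνΔ, fun hσν => ?_⟩
    rcases Finset.mem_symmDiff.mp hν with ⟨h1', h2'⟩ | ⟨h1', h2'⟩
    · exact h2' ((key ν hσν).mpr h1')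
    · exact h2' ((key ν hσν).mp h1')
  have hz'c : bdry z' = ∅ := by
    rw [hz', bdry_symmDiff, hzc, bdry_bdry]
    simp
  obtain ⟨c', hc', hbc'⟩ := hex z' hz'mem hz'c
  refine ⟨c' ∆ w, ?_, ?_⟩
  · intro ν hν
    rcases Finset.mem_symmDiff.mp hν with ⟨h', -⟩ | ⟨h', -⟩
    · have := hc' ν h'
      rw [hΔ'] at this
      exact this.1
    · exact (hwmem ν h').1
  · rw [bdry_symmDiff, hbc', hz', symmDiff_symmDiff_cancel_right]


/-! ### The subcomplexes generated by initial segments of a shelling -/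

def Dcx (F : Fin t → Finset V) (m : ℕ) : Set (Finset V) :=
  {ν | ∃ j : Fin t, (j : ℕ) < m ∧ ν ⊆ F j}

open Classical in
noncomputable def sface (F : Fin t → Finset V) (m : ℕ) (hm : m < t) : Finset V :=
  (F ⟨m, hm⟩).filter (fun v => (F ⟨m, hm⟩).erase v ∈ Dcx F m)

variable {t : ℕ} {F : Fin t → Finset V} {k : ℕ}

lemma mem_sface {m : ℕ} {hm : m < t} {v : V} :
    v ∈ sface F m hm ↔ v ∈ F ⟨m, hm⟩ ∧ (F ⟨m, hm⟩).erase v ∈ Dcx F m := by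
  classical
  rw [sface]
  rw [Finset.mem_filter]

lemma sface_subset {m : ℕ} {hm : m < t} : sface F m hm ⊆ F ⟨m, hm⟩ :=
  fun v hv => (mem_sface.mp hv).1

lemma Dcx_mono {m m' : ℕ} (h : m ≤ m') : Dcx F m ⊆ Dcx F m' := by
  rintro ν ⟨j, hj, hsub⟩
  exact ⟨j, lt_of_lt_of_le hj h, hsub⟩

lemma Dcx_down {m : ℕ} : ∀ ν ∈ Dcx F m, ∀ μ, μ ⊆ ν → μ ∈ Dcx F m := by
  rintro ν ⟨j, hj, hsub⟩ μ hμ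
  exact ⟨j, hj, hμ.trans hsub⟩

lemma Dcx_zero : Dcx F 0 = ∅ := by
  ext ν
  simp [Dcx]

section WithShelling

variable (hk : 0 < k) (hcard : ∀ i, (F i).card = k) (hinj : Function.Injective F)
variable (hshell : ∀ i : Fin t, 0 < (i : ℕ) → ∀ ν ⊆ F i, (∃ j, j < i ∧ ν ⊆ F j) →
    ∃ μ, μ ⊆ F i ∧ (∃ j, j < i ∧ μ ⊆ F j) ∧ ν ⊆ μ ∧ μ.card = k - 1)

include hk hcard hshell in
lemma sface_not_old {m : ℕ} (hm : m < t) : sface F m hm ∉ Dcx F m := by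
  rintro ⟨j, hj, hsub⟩
  rcases Nat.eq_zero_or_pos m with rfl | hpos
  · exact Nat.not_lt_zero _ hj
  · set i : Fin t := ⟨m, hm⟩ with hi
    obtain ⟨μ, hμF, ⟨j', hj', hμj'⟩, hsμ, hμcard⟩ :=
      hshell i hpos (sface F m hm) sface_subset ⟨j, by rwa [Fin.lt_def], hsub⟩
    have hcards : (F i \ μ).card = 1 := by
      rw [Finset.card_sdiff_of_subset hμF, hcard i, hμcard]
      omega
    obtain ⟨v, hv⟩ := Finset.card_eq_one.mp hcards
    have hvmem : v ∈ F i \ μ := hv ▸ Finset.mem_singleton_self v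
    rw [Finset.mem_sdiff] at hvmem
    have hμe : μ = (F i).erase v := by
      apply Finset.eq_of_subset_of_card_le
      · exact Finset.subset_erase.mpr ⟨hμF, hvmem.2⟩
      · rw [Finset.card_erase_of_mem hvmem.1, hcard i, hμcard]
    have hvs : v ∈ sface F m hm := by
      rw [mem_sface]
      refine ⟨hvmem.1, ⟨j', by rwa [Fin.lt_def] at hj', ?_⟩⟩
      rw [← hμe]
      exact hμj'
    have := hsμ hvs
    rw [hμe] at this
    exact Finset.notMem_erase v _ this

include hk hcard hshell in
lemma Dcx_succ {m : ℕ} (hm : m < t) :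
    Dcx F m = {ν ∈ Dcx F (m + 1) | ¬ sface F m hm ⊆ ν} := by
  ext ν
  constructor
  · intro hν
    refine ⟨Dcx_mono (Nat.le_succ m) hν, fun hsν => ?_⟩
    exact sface_not_old hk hcard hshell hm (Dcx_down ν hν _ hsν)
  · rintro ⟨⟨j, hj, hsub⟩, hsν⟩
    rcases Nat.lt_succ_iff_lt_or_eq.mp hj with hj' | hj'
    · exact ⟨j, hj', hsub⟩
    · obtain ⟨v, hvs, hvν⟩ := Finset.not_subset.mp hsν
      have hjm : j = (⟨m, hm⟩ : Fin t) := Fin.ext hj'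
      rw [mem_sface] at hvs
      refine Dcx_down _ hvs.2 ν ?_
      rw [Finset.subset_erase]
      exact ⟨hjm ▸ hsub, hvν⟩

include hk hcard hshell in
lemma subset_Fm {m : ℕ} (hm : m < t) :
    ∀ ν ∈ Dcx F (m + 1), sface F m hm ⊆ ν → ν ⊆ F ⟨m, hm⟩ := by
  rintro ν ⟨j, hj, hsub⟩ hsν
  rcases Nat.lt_succ_iff_lt_or_eq.mp hj with hj' | hj'
  · exact absurd ⟨j, hj', hsν.trans hsub⟩ (sface_not_old hk hcard hshell hm)
  · have hjm : j = (⟨m, hm⟩ : Fin t) := Fin.ext hj'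
    rwa [hjm] at hsub

include hcard in
lemma facet_Fm {m : ℕ} (hm : m < t) : IsFacet (Dcx F (m + 1)) (F ⟨m, hm⟩) := by
  refine ⟨⟨⟨m, hm⟩, Nat.lt_succ_self m, subset_rfl⟩, ?_⟩
  rintro s ⟨j, hj, hsub⟩ hFs
  have hsj : s = F j := by
    apply Finset.eq_of_subset_of_card_le hsub
    rw [hcard j]
    calc k = (F ⟨m, hm⟩).card := (hcard _).symm
    _ ≤ s.card := Finset.card_le_card hFs
  have : F ⟨m, hm⟩ = F j := by
    apply Finset.eq_of_subset_of_card_le (hsj ▸ hFs)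
    rw [hcard, hcard]
  rw [hsj, ← this]

include hk hcard hshell in
lemma freepair_Fm {m : ℕ} (hm : m < t) (hne : sface F m hm ≠ F ⟨m, hm⟩) :
    FreePair (Dcx F (m + 1)) (sface F m hm) (F ⟨m, hm⟩) := by
  refine ⟨facet_Fm hcard hm, ssubset_of_subset_of_ne sface_subset hne, ?_⟩
  rintro τ' ⟨hτ'mem, hτ'max⟩ hsτ'
  obtain ⟨j, hj, hsub⟩ := hτ'mem
  have hτ'j : τ' = F j := (hτ'max (F j) ⟨j, hj, subset_rfl⟩ hsub).symm
  rcases Nat.lt_succ_iff_lt_or_eq.mp hj with hj' | hj'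
  · exact absurd ⟨j, hj', hτ'j ▸ hsτ'⟩ (sface_not_old hk hcard hshell hm)
  · have hjm : j = (⟨m, hm⟩ : Fin t) := Fin.ext hj'
    rw [hτ'j, hjm]

include hk hcard hshell in
lemma collapse_step_Fm {m : ℕ} (hm : m < t) (hne : sface F m hm ≠ F ⟨m, hm⟩) :
    CollapseStep (Dcx F (m + 1)) (Dcx F m) :=
  ⟨sface F m hm, F ⟨m, hm⟩, freepair_Fm hk hcard hshell hm hne,
    Dcx_succ hk hcard hshell hm⟩

include hk hcard hshell in
lemma collapses_Dcx (hne : ∀ m (hm : m < t), sface F m hm ≠ F ⟨m, hm⟩) :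
    Collapses (Dcx F t) (∅ : Set (Finset V)) := by
  have main : ∀ m, m ≤ t → Collapses (Dcx F m) (∅ : Set (Finset V)) := by
    intro m
    induction m with
    | zero => intro _; rw [Dcx_zero]; exact Relation.ReflTransGen.refl
    | succ m ih =>
      intro hm'
      have hm : m < t := hm'
      exact Relation.ReflTransGen.head (collapse_step_Fm hk hcard hshell hm (hne m hm))
        (ih (le_of_lt hm))
  exact main t le_rfl

include hk hcard hshell in
lemma exact_Dcx {m : ℕ} (hm : m ≤ t)
    (hne : ∀ l (hl : l < t), l < m → sface F l hl ≠ F ⟨l, hl⟩) :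
    ∀ z : Finset (Finset V), (∀ ν ∈ z, ν ∈ Dcx F m) → bdry z = ∅ →
      ∃ c, (∀ ν ∈ c, ν ∈ Dcx F m) ∧ bdry c = z := by
  induction m with
  | zero =>
    intro z hz hzc
    have : z = ∅ := by
      rw [Finset.eq_empty_iff_forall_notMem]
      intro ν hν
      have := hz ν hν
      rw [Dcx_zero] at this
      exact this
    exact ⟨∅, by simp, by rw [bdry_empty, this]⟩
  | succ m ih =>
    have hmt : m < t := hm
    obtain ⟨v, hvF, hvs⟩ := Finset.exists_of_ssubset
      (ssubset_of_subset_of_ne sface_subset (hne m hmt (Nat.lt_succ_self m)))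
    refine interval_exact (Dcx F (m + 1)) (Dcx F m) (sface F m hmt) (F ⟨m, hmt⟩) v
      ⟨⟨m, hmt⟩, Nat.lt_succ_self m, subset_rfl⟩ hvF
      (fun hv => hvs (by { rw [mem_sface] at hv ⊢; exact hv })) Dcx_down
      (subset_Fm hk hcard hshell hmt) (Dcx_succ hk hcard hshell hmt)
      (ih (le_of_lt hmt) (fun l hl hlm => hne l hl (Nat.lt_succ_of_lt hlm)))

end WithShelling
end ChainsAux



section PolarAux
variable {n : ℕ}

lemma mem_polarFace {σ : Finset (Fin n)} {x : Fin n ⊕ Fin n} :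
    x ∈ polarFace σ ↔ Sum.elim (· ∈ σ) (· ∉ σ) x := by
  cases x with
  | inl a => simp [polarFace]
  | inr a => simp [polarFace]

lemma card_polarFace (σ : Finset (Fin n)) : (polarFace σ).card = n := by
  rw [polarFace, Finset.card_union_of_disjoint]
  · rw [Finset.card_image_of_injective _ Sum.inl_injective,
      Finset.card_image_of_injective _ Sum.inr_injective, Finset.card_compl]
    have := Finset.card_le_univ σ
    simp only [Fintype.card_fin] at *
    omega
  · rw [Finset.disjoint_left]
    rintro x hx hx'
    rw [Finset.mem_image] at hx hx'
    obtain ⟨a, -, rfl⟩ := hx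
    obtain ⟨b, -, h⟩ := hx'
    exact Sum.inr_ne_inl h

lemma polarFace_subset {σ σ' : Finset (Fin n)} (h : polarFace σ ⊆ polarFace σ') : σ = σ' := by
  ext a
  constructor
  · intro ha
    have h1 : (Sum.inl a : Fin n ⊕ Fin n) ∈ polarFace σ := mem_polarFace.mpr (by simpa using ha)
    have := h h1
    simpa [mem_polarFace] using this
  · intro ha
    by_contra hna
    have h1 : (Sum.inr a : Fin n ⊕ Fin n) ∈ polarFace σ := mem_polarFace.mpr (by simpa using hna)
    have := h h1
    rw [mem_polarFace] at this
    exact this ha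

lemma face_eq_polarFace {C : Set (Finset (Fin n))} {ν : Finset (Fin n ⊕ Fin n)}
    (h : ν ∈ polar C) (hc : ν.card = n) : ∃ σ ∈ C, ν = polarFace σ := by
  obtain ⟨σ, hσ, hsub⟩ := h
  exact ⟨σ, hσ, Finset.eq_of_subset_of_card_le hsub (by rw [card_polarFace, hc])⟩

def vertOf (σ : Finset (Fin n)) (a : Fin n) : Fin n ⊕ Fin n :=
  if a ∈ σ then .inl a else .inr a

def covertOf (σ : Finset (Fin n)) (a : Fin n) : Fin n ⊕ Fin n :=
  if a ∈ σ then .inr a else .inl a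

lemma vertOf_mem {σ : Finset (Fin n)} {a : Fin n} : vertOf σ a ∈ polarFace σ := by
  by_cases h : a ∈ σ <;> simp [vertOf, h, mem_polarFace]

lemma eq_or_flip {σ σ'' : Finset (Fin n)} {a : Fin n}
    (h : ∀ b, b ≠ a → (b ∈ σ ↔ b ∈ σ'')) : σ'' = σ ∨ σ'' = σ ∆ {a} := by
  by_cases ha : (a ∈ σ ↔ a ∈ σ'')
  · left
    ext b
    by_cases hb : b = a
    · subst hb; exact ha.symm
    · exact (h b hb).symm
  · right
    ext b
    rw [Finset.mem_symmDiff]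
    simp only [Finset.mem_singleton]
    by_cases hb : b = a
    · subst hb; tauto
    · have := h b hb
      tauto

lemma ridge_cases {σ σ'' : Finset (Fin n)} {a : Fin n}
    (h : (polarFace σ).erase (vertOf σ a) ⊆ polarFace σ'') :
    σ'' = σ ∨ σ'' = σ ∆ {a} := by
  apply eq_or_flip
  intro b hb
  have hvb : vertOf σ b ∈ (polarFace σ).erase (vertOf σ a) := by
    rw [Finset.mem_erase]
    refine ⟨?_, vertOf_mem⟩
    unfold vertOf
    by_cases h1 : b ∈ σ <;> by_cases h2 : a ∈ σ <;> simp [h1, h2, hb]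
  have hmem := h hvb
  by_cases h1 : b ∈ σ
  · rw [vertOf, if_pos h1, mem_polarFace] at hmem
    simp only [Sum.elim_inl] at hmem
    simp [h1, hmem]
  · rw [vertOf, if_neg h1, mem_polarFace] at hmem
    simp only [Sum.elim_inr] at hmem
    simp [h1, hmem]

lemma polarFace_flip (σ : Finset (Fin n)) (a : Fin n) :
    polarFace (σ ∆ {a}) = insert (covertOf σ a) ((polarFace σ).erase (vertOf σ a)) := by
  ext x
  rw [Finset.mem_insert, Finset.mem_erase, mem_polarFace, mem_polarFace]
  cases x with
  | inl b =>
    simp only [Sum.elim_inl, Finset.mem_symmDiff, Finset.mem_singleton]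
    unfold vertOf covertOf
    by_cases hb : b = a
    · subst hb
      by_cases h1 : b ∈ σ <;> simp [h1]
    · by_cases h1 : a ∈ σ <;> by_cases h2 : b ∈ σ <;> simp [h1, h2, hb]
  | inr b =>
    simp only [Sum.elim_inr, Finset.mem_symmDiff, Finset.mem_singleton]
    unfold vertOf covertOf
    by_cases hb : b = a
    · subst hb
      by_cases h1 : b ∈ σ <;> simp [h1]
    · by_cases h1 : a ∈ σ <;> by_cases h2 : b ∈ σ <;> simp [h1, h2, hb]

lemma closure_step {C : Set (Finset (Fin n))} {Z : Finset (Finset (Fin n ⊕ Fin n))}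
    (hZ : ∀ ν ∈ Z, ν ∈ polar C) (hbd : bdry Z = ∅)
    {σ : Finset (Fin n)} (hσ : polarFace σ ∈ Z) (a : Fin n) :
    polarFace (σ ∆ {a}) ∈ Z := by
  classical
  set x := vertOf σ a with hx
  set x' := covertOf σ a with hx'
  set ρ := (polarFace σ).erase x with hρ
  have hxmem : x ∈ polarFace σ := vertOf_mem
  have hxρ : x ∉ ρ := Finset.notMem_erase _ _
  have hinsx : insert x ρ = polarFace σ := Finset.insert_erase hxmem
  have hsub : multSet Z ρ ⊆ {x, x'} := by
    intro y hy
    rw [mem_multSet] at hy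
    obtain ⟨hyρ, hyZ⟩ := hy
    have hν : insert y ρ ∈ polar C := hZ _ hyZ
    have hcards : (insert y ρ).card = n := by
      rw [Finset.card_insert_of_notMem hyρ, hρ, Finset.card_erase_of_mem hxmem,
        card_polarFace]
      have hpos : 0 < (polarFace σ).card := Finset.card_pos.mpr ⟨x, hxmem⟩
      rw [card_polarFace] at hpos
      omega
    obtain ⟨σ'', hσ''C, hνeq⟩ := face_eq_polarFace hν hcards
    have hρsub : (polarFace σ).erase (vertOf σ a) ⊆ polarFace σ'' := by
      rw [← hνeq]
      exact Finset.subset_insert _ _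
    rcases ridge_cases hρsub with h'' | h''
    · rw [h'', ← hinsx] at hνeq
      have hy2 : y ∈ insert x ρ := by rw [← hνeq]; exact Finset.mem_insert_self _ _
      rcases Finset.mem_insert.mp hy2 with h | h
      · simp [h]
      · exact absurd h hyρ
    · rw [h'', polarFace_flip] at hνeq
      have hy2 : y ∈ insert x' ρ := by rw [← hνeq]; exact Finset.mem_insert_self _ _
      rcases Finset.mem_insert.mp hy2 with h | h
      · simp [h]
      · exact absurd h hyρ
  have hxin : x ∈ multSet Z ρ := mem_multSet.mpr ⟨hxρ, by rw [hinsx]; exact hσ⟩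
  have hnotodd : ¬ Odd (multSet Z ρ).card := by
    have h3 : ρ ∉ bdry Z := by rw [hbd]; exact Finset.notMem_empty _
    rwa [mem_bdry] at h3
  have hx'in : x' ∈ multSet Z ρ := by
    by_contra hx'n
    have hsub1 : multSet Z ρ ⊆ {x} := by
      intro y hy
      rcases Finset.mem_insert.mp (hsub hy) with h | h
      · simp [h]
      · rw [Finset.mem_singleton] at h
        exact absurd (h ▸ hy) hx'n
    rcases Finset.subset_singleton_iff.mp hsub1 with h | h
    · rw [h] at hxin; exact absurd hxin (Finset.notMem_empty _)
    · rw [h] at hnotodd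
      simp at hnotodd
  rw [mem_multSet] at hx'in
  rw [polarFace_flip]
  exact hx'in.2

lemma closure_all {C : Set (Finset (Fin n))} {Z : Finset (Finset (Fin n ⊕ Fin n))}
    (hZ : ∀ ν ∈ Z, ν ∈ polar C) (hbd : bdry Z = ∅)
    {σ₀ : Finset (Fin n)} (h₀ : polarFace σ₀ ∈ Z) :
    ∀ σ' : Finset (Fin n), polarFace σ' ∈ Z := by
  have main : ∀ d (σ' : Finset (Fin n)), (σ' ∆ σ₀).card = d → polarFace σ' ∈ Z := by
    intro d
    induction d with
    | zero =>
      intro σ' h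
      have h1 : σ' ∆ σ₀ = ∅ := Finset.card_eq_zero.mp h
      have h2 : σ' = σ₀ := by rwa [← Finset.bot_eq_empty, symmDiff_eq_bot] at h1
      rwa [h2]
    | succ d ih =>
      intro σ' h
      obtain ⟨a, ha⟩ := Finset.card_pos.mp (by rw [h]; exact Nat.succ_pos d)
      have key : ((σ' ∆ {a}) ∆ σ₀).card = d := by
        have h1 : (σ' ∆ {a}) ∆ σ₀ = (σ' ∆ σ₀).erase a := by
          rw [symmDiff_right_comm]
          ext b
          rw [Finset.mem_symmDiff, Finset.mem_erase]
          simp only [Finset.mem_singleton]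
          constructor
          · rintro (⟨hb, hba⟩ | ⟨hba, hb⟩)
            · exact ⟨hba, hb⟩
            · exact absurd (hba ▸ ha) hb
          · rintro ⟨hba, hb⟩
            exact Or.inl ⟨hb, hba⟩
        rw [h1, Finset.card_erase_of_mem ha, h]
        omega
      have hstep := closure_step hZ hbd (ih (σ' ∆ {a}) key) a
      rwa [symmDiff_symmDiff_cancel_right] at hstep
  intro σ'
  exact main _ σ' rfl

lemma full_attach_univ {C : Set (Finset (Fin n))} {t : ℕ}
    {F : Fin t → Finset (Fin n ⊕ Fin n)} (hn : 0 < n)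
    (hcard : ∀ i, (F i).card = n) (hinj : Function.Injective F)
    (hshell : ∀ i : Fin t, 0 < (i : ℕ) → ∀ ν ⊆ F i, (∃ j, j < i ∧ ν ⊆ F j) →
      ∃ μ, μ ⊆ F i ∧ (∃ j, j < i ∧ μ ⊆ F j) ∧ ν ⊆ μ ∧ μ.card = n - 1)
    (hΔ : polar C = {ν | ∃ i, ν ⊆ F i})
    {m : ℕ} (hm : m < t) (hfull : sface F m hm = F ⟨m, hm⟩)
    (hminne : ∀ l (hl : l < t), l < m → sface F l hl ≠ F ⟨l, hl⟩) :
    C = Set.univ := by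
  classical
  have hpolarD : polar C = Dcx F t := by
    rw [hΔ]
    ext ν
    constructor
    · rintro ⟨i, hi⟩; exact ⟨i, i.isLt, hi⟩
    · rintro ⟨i, -, hi⟩; exact ⟨i, hi⟩
  set Fm := F ⟨m, hm⟩ with hFm
  have hzmem : ∀ ν ∈ bdry ({Fm} : Finset (Finset (Fin n ⊕ Fin n))), ν ∈ Dcx F m := by
    intro ν hν
    rw [bdry_singleton, Finset.mem_image] at hν
    obtain ⟨v, hv, rfl⟩ := hν
    have hvs : v ∈ sface F m hm := by rw [hfull]; exact hv
    exact (mem_sface.mp hvs).2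
  obtain ⟨c, hc, hbc⟩ := exact_Dcx hn hcard hshell (le_of_lt hm) hminne
    (bdry ({Fm} : Finset (Finset (Fin n ⊕ Fin n)))) hzmem (bdry_bdry _)
  set Z := c ∆ {Fm} with hZ
  have hFmnotc : Fm ∉ c := by
    intro hmem
    obtain ⟨j, hj, hsub⟩ := hc _ hmem
    have h1 : Fm = F j := Finset.eq_of_subset_of_card_le hsub (by rw [hcard, hcard])
    have h2 := hinj h1
    rw [← h2] at hj
    exact absurd hj (lt_irrefl m)
  have hFmZ : Fm ∈ Z :=
    Finset.mem_symmDiff.mpr (Or.inr ⟨Finset.mem_singleton_self _, hFmnotc⟩)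
  have hZpolar : ∀ ν ∈ Z, ν ∈ polar C := by
    intro ν hν
    rw [hpolarD]
    rcases Finset.mem_symmDiff.mp hν with ⟨h', -⟩ | ⟨h', -⟩
    · exact Dcx_mono (le_of_lt hm) (hc _ h')
    · rw [Finset.mem_singleton] at h'
      subst h'
      exact ⟨⟨m, hm⟩, hm, subset_rfl⟩
  have hZbd : bdry Z = ∅ := by
    rw [hZ, bdry_symmDiff, hbc]
    simp
  obtain ⟨σm, hσmC, hFmeq⟩ := face_eq_polarFace (hZpolar _ hFmZ) (hcard _)
  have hall : ∀ σ' : Finset (Fin n), polarFace σ' ∈ Z :=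
    closure_all hZpolar hZbd (hFmeq ▸ hFmZ)
  rw [Set.eq_univ_iff_forall]
  intro σ'
  obtain ⟨σ'', hσ''C, heq⟩ := face_eq_polarFace (hZpolar _ (hall σ')) (card_polarFace _)
  have h3 : σ' = σ'' := polarFace_subset (heq ▸ subset_rfl)
  rwa [h3]

end PolarAux

/-- If the polar complex `Γ(C)` is shellable then either `C` is the full code `2^[n]`
or `Γ(C)` is collapsible. -/
theorem shellable_polar_full_or_collapsible {n : ℕ} (C : Set (Finset (Fin n)))
    (hsh : Shellable n (polar C)) :
    C = Set.univ ∨ Collapsible (polar C) := by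
  classical
  by_cases hC : C = Set.univ
  · exact Or.inl hC
  right
  obtain ⟨t, F, ⟨hcard, hinj, hshell⟩, hΔ⟩ := hsh
  rcases Nat.eq_zero_or_pos n with rfl | hn
  · have hpc : polar C = ∅ := by
      ext ν
      simp only [Set.mem_empty_iff_false, iff_false]
      rintro ⟨σ, hσ, -⟩
      apply hC
      rw [Set.eq_univ_iff_forall]
      intro τ
      have hτσ : τ = σ := by
        ext a
        exact a.elim0
      rwa [hτσ]
    show Collapses (polar C) ∅
    rw [hpc]
    exact Relation.ReflTransGen.refl
  · have hpolarD : polar C = Dcx F t := by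
      rw [hΔ]
      ext ν
      constructor
      · rintro ⟨i, hi⟩; exact ⟨i, i.isLt, hi⟩
      · rintro ⟨i, -, hi⟩; exact ⟨i, hi⟩
    by_cases hfull : ∃ m, ∃ hm : m < t, sface F m hm = F ⟨m, hm⟩
    · exfalso
      apply hC
      have hP := Nat.find_spec hfull
      obtain ⟨hm0, heq0⟩ := hP
      refine full_attach_univ hn hcard hinj hshell hΔ hm0 heq0 ?_
      intro l hl hlm heq
      exact Nat.find_min hfull hlm ⟨hl, heq⟩
    · push_neg at hfull
      show Collapses (polar C) ∅
      rw [hpolarD]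
      exact collapses_Dcx hn hcard hshell hfull
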